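/- The discrete Hilbert transform on ℓ²(ℤ), given by the matrix h_{jk} = 1/(j−k) for j ≠ k and h_{jj} = 0, defines a bounded linear operator on ℓ²(ℤ) with operator norm at most π. -/

import Mathlib

open MeasureTheory Complex Set AddCircle intervalIntegral
open scoped Real ComplexConjugate

noncomputable section

namespace DHT

local instance : Fact ((0:ℝ) < 1) := ⟨one_pos⟩

/-- The symbol of the discrete Hilbert transform. -/
def φ : ℝ → ℂ := fun x => (Real.pi : ℂ) * Complex.I * (1 - 2 * x)

def Φ : AddCircle (1:ℝ) → ℂ := liftIoc 1 0 φ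

lemma Φ_bound (x : AddCircle (1:ℝ)) : ‖Φ x‖ ≤ Real.pi := by
  have h : (equivIoc 1 0 x : ℝ) ∈ Set.Ioc (0:ℝ) (0 + 1) := (equivIoc 1 0 x).2
  show ‖φ _‖ ≤ Real.pi
  rw [φ]
  set t : ℝ := (equivIoc 1 0 x : ℝ)
  have h1 : (0:ℝ) < t := h.1
  have h2 : t ≤ 1 := by simpa using h.2
  have : ‖(Real.pi : ℂ) * Complex.I * (1 - 2 * (t:ℂ))‖
      = Real.pi * |1 - 2 * t| := by
    simp only [norm_mul, Complex.norm_I, mul_one]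
    rw [Complex.norm_real]
    have : ((1 : ℂ) - 2 * (t:ℂ)) = ((1 - 2*t : ℝ) : ℂ) := by push_cast; ring
    rw [this, Complex.norm_real, Real.norm_eq_abs, Real.norm_eq_abs,
      _root_.abs_of_nonneg Real.pi_pos.le]
  rw [this]
  have : |1 - 2*t| ≤ 1 := by rw [abs_le]; constructor <;> nlinarith
  nlinarith [Real.pi_pos]

lemma Φ_measurable : Measurable Φ :=
  ((continuous_const.mul (continuous_const.sub (continuous_const.mul
    Complex.continuous_ofReal))).measurable.comp
    (measurable_subtype_coe.comp (measurableEquivIoc 1 0).measurable))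

lemma Φ_aesm : AEStronglyMeasurable Φ (@haarAddCircle 1 _) :=
  Φ_measurable.aestronglyMeasurable

lemma integral_linexp {c : ℂ} (hc : c ≠ 0) :
    ∫ x : ℝ in (0:ℝ)..1, Complex.exp (c * x) * (1 - 2 * x) =
      (-1/c + 2/c^2) * Complex.exp c - (1/c + 2/c^2) := by
  have h : ∀ x ∈ Set.uIcc (0:ℝ) 1,
      HasDerivAt (fun x : ℝ => (((1:ℂ) - 2*x)/c + 2/c^2) * Complex.exp (c*x))
        (Complex.exp (c*x) * (1 - 2*x)) x := by
    intro x _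
    have hx : HasDerivAt (fun x : ℝ => (x:ℂ)) 1 x := by
      simpa using (hasDerivAt_id x).ofReal_comp
    have h1 : HasDerivAt (fun x : ℝ => ((1:ℂ) - 2*x)/c + 2/c^2) (-2/c) x := by
      have := (((hx.const_mul (2:ℂ)).const_sub 1).div_const c).add_const (2/c^2)
      simpa using this
    have h2 : HasDerivAt (fun x : ℝ => Complex.exp (c*x)) (Complex.exp (c*x) * c) x :=
      by simpa using (hx.const_mul c).cexp
    have := h1.mul h2
    refine this.congr_deriv ?_
    field_simp
    ring
  rw [intervalIntegral.integral_eq_sub_of_hasDerivAt h]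
  · push_cast
    field_simp
    simp only [mul_zero, Complex.exp_zero]
    ring
  · apply Continuous.intervalIntegrable
    exact (Complex.continuous_exp.comp (continuous_const.mul Complex.continuous_ofReal)).mul
      (continuous_const.sub (continuous_const.mul Complex.continuous_ofReal))

lemma fourierCoeff_Φ (m : ℤ) :
    fourierCoeff Φ m = if m = 0 then 0 else 1 / (m : ℂ) := by
  rw [Φ, fourierCoeff_liftIoc_eq, fourierCoeffOn_eq_integral]
  norm_num
  by_cases hm : m = 0
  · subst hm
    norm_num
    have h : ∀ x ∈ Set.uIcc (0:ℝ) 1,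
        HasDerivAt (fun x : ℝ => (Real.pi : ℂ) * Complex.I * (x - x*x)) (φ x) x := by
      intro x _
      have hx : HasDerivAt (fun x : ℝ => (x:ℂ)) 1 x := by
        simpa using (hasDerivAt_id x).ofReal_comp
      have := ((hx.sub (hx.mul hx)).const_mul ((Real.pi : ℂ) * Complex.I))
      refine this.congr_deriv ?_
      rw [φ]
      ring
    rw [intervalIntegral.integral_eq_sub_of_hasDerivAt h]
    · norm_num
    · apply Continuous.intervalIntegrable
      exact continuous_const.mul (continuous_const.sub
        (continuous_const.mul Complex.continuous_ofReal))
  · rw [if_neg hm]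
    have hm' : (m:ℂ) ≠ 0 := Int.cast_ne_zero.mpr hm
    have hπ : (Real.pi : ℂ) ≠ 0 := Complex.ofReal_ne_zero.mpr Real.pi_ne_zero
    have hc : (-(2 * (Real.pi:ℂ) * Complex.I * m)) ≠ 0 := by
      simp [hπ, hm', Complex.I_ne_zero, Complex.ext_iff]
    have key : ∀ x : ℝ, (starRingEnd ℂ) (Complex.exp (2 * (Real.pi:ℂ) * Complex.I * m * x)) * φ x
        = ((Real.pi:ℂ) * Complex.I) *
          (Complex.exp ((-(2 * (Real.pi:ℂ) * Complex.I * m)) * x) * (1 - 2 * x)) := by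
      intro x
      have harg : (starRingEnd ℂ) (2 * (Real.pi:ℂ) * Complex.I * m * x)
          = (-(2 * (Real.pi:ℂ) * Complex.I * m)) * x := by
        simp [map_mul, map_ofNat, Complex.conj_I, Complex.conj_ofReal]
      rw [← Complex.exp_conj, harg, φ]
      ring
    simp_rw [key]
    rw [intervalIntegral.integral_const_mul, integral_linexp hc]
    have hexp : Complex.exp (-(2 * (Real.pi:ℂ) * Complex.I * m)) = 1 := by
      have : (-(2 * (Real.pi:ℂ) * Complex.I * m)) = ((-m : ℤ) : ℂ) * (2 * Real.pi * Complex.I) := by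
        push_cast; ring
      rw [this, Complex.exp_int_mul_two_pi_mul_I]
    rw [hexp]
    have hc2 : (2 * (Real.pi:ℂ) * Complex.I * m) ≠ 0 := fun h => hc (by rw [h, neg_zero])
    field_simp [hc2]
    ring

lemma memLp_mulPhi (A : Lp ℂ 2 (@haarAddCircle 1 _)) :
    MemLp (fun x => Φ x * A x) 2 (@haarAddCircle 1 _) := by
  refine MemLp.of_le ((Lp.memLp A).const_mul ((Real.pi:ℂ)))
    (Φ_aesm.mul (Lp.aestronglyMeasurable A)) (Filter.Eventually.of_forall fun x => ?_)
  rw [norm_mul, norm_mul]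
  refine mul_le_mul_of_nonneg_right ?_ (norm_nonneg _)
  simpa [Complex.norm_real, _root_.abs_of_nonneg Real.pi_pos.le] using Φ_bound x

lemma eLpNorm_mulPhi_le (A : Lp ℂ 2 (@haarAddCircle 1 _)) :
    eLpNorm (fun x => Φ x * A x) 2 (@haarAddCircle 1 _)
      ≤ ENNReal.ofReal Real.pi * eLpNorm (A : AddCircle (1:ℝ) → ℂ) 2 (@haarAddCircle 1 _) := by
  have h1 : eLpNorm (fun x => Φ x * A x) 2 (@haarAddCircle 1 _)
      ≤ eLpNorm (fun x => (Real.pi:ℂ) * A x) 2 (@haarAddCircle 1 _) := by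
    refine eLpNorm_mono_ae (Filter.Eventually.of_forall fun x => ?_)
    rw [norm_mul, norm_mul]
    refine mul_le_mul_of_nonneg_right ?_ (norm_nonneg _)
    simpa [Complex.norm_real, _root_.abs_of_nonneg Real.pi_pos.le] using Φ_bound x
  refine h1.trans (le_of_eq ?_)
  have : (fun x => (Real.pi:ℂ) * A x) = (Real.pi:ℂ) • (A : AddCircle (1:ℝ) → ℂ) := by
    ext x; simp
  rw [this, eLpNorm_const_smul]
  congr 1
  rw [← Real.enorm_eq_ofReal Real.pi_pos.le]
  simp only [enorm_eq_nnnorm, Complex.nnnorm_real]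

def mulΦ : Lp ℂ 2 (@haarAddCircle 1 _) →L[ℂ] Lp ℂ 2 (@haarAddCircle 1 _) :=
  LinearMap.mkContinuous
    { toFun := fun A => (memLp_mulPhi A).toLp _
      map_add' := fun A B => by
        rw [← MemLp.toLp_add]
        rw [MemLp.toLp_eq_toLp_iff]
        filter_upwards [Lp.coeFn_add A B] with x hx
        rw [hx]; simp [mul_add]
      map_smul' := fun c A => by
        rw [← MemLp.toLp_const_smul]
        rw [MemLp.toLp_eq_toLp_iff]
        filter_upwards [Lp.coeFn_smul c A] with x hx
        rw [hx]; simp; ring }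
    Real.pi (fun A => by
      rw [LinearMap.coe_mk, AddHom.coe_mk, Lp.norm_toLp]
      have := eLpNorm_mulPhi_le A
      have hfin : ENNReal.ofReal Real.pi * eLpNorm (A : AddCircle (1:ℝ) → ℂ) 2 (@haarAddCircle 1 _) ≠ ⊤ :=
        ENNReal.mul_ne_top ENNReal.ofReal_ne_top (Lp.eLpNorm_ne_top A)
      calc (eLpNorm (fun x => Φ x * A x) 2 (@haarAddCircle 1 _)).toReal
          ≤ (ENNReal.ofReal Real.pi * eLpNorm (A : AddCircle (1:ℝ) → ℂ) 2 (@haarAddCircle 1 _)).toReal :=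
            ENNReal.toReal_mono hfin this
        _ = Real.pi * ‖A‖ := by
            rw [ENNReal.toReal_mul, ENNReal.toReal_ofReal Real.pi_pos.le, Lp.norm_def])

lemma fourierCoeff_congr {f g : AddCircle (1:ℝ) → ℂ}
    (h : f =ᵐ[@haarAddCircle 1 _] g) (n : ℤ) : fourierCoeff f n = fourierCoeff g n := by
  unfold fourierCoeff
  exact integral_congr_ae (by filter_upwards [h] with x hx; rw [hx])

def Hop : lp (fun _ : ℤ => ℂ) 2 →L[ℂ] lp (fun _ : ℤ => ℂ) 2 :=
  (((fourierBasis (T := 1)).repr.toContinuousLinearEquiv.toContinuousLinearMap).comp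
    mulΦ).comp ((fourierBasis (T := 1)).repr.symm.toContinuousLinearEquiv.toContinuousLinearMap)

lemma Hop_apply (a : lp (fun _ : ℤ => ℂ) 2) :
    Hop a = (fourierBasis (T := 1)).repr (mulΦ ((fourierBasis (T := 1)).repr.symm a)) := rfl

lemma Hop_norm : ‖Hop‖ ≤ Real.pi := by
  refine ContinuousLinearMap.opNorm_le_bound _ Real.pi_pos.le fun a => ?_
  rw [Hop_apply, LinearIsometryEquiv.norm_map]
  calc ‖mulΦ ((fourierBasis (T := 1)).repr.symm a)‖
      ≤ ‖mulΦ‖ * ‖(fourierBasis (T := 1)).repr.symm a‖ := mulΦ.le_opNorm _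
    _ ≤ Real.pi * ‖a‖ := by
        rw [LinearIsometryEquiv.norm_map]
        exact mul_le_mul_of_nonneg_right
          (LinearMap.mkContinuous_norm_le _ Real.pi_pos.le _) (norm_nonneg a)

lemma Hop_single (k j : ℤ) (cc : ℂ) :
    Hop (lp.single 2 k cc) j = if k = j then 0 else cc / ((j:ℂ) - (k:ℂ)) := by
  have hsingle : (lp.single 2 k cc : lp (fun _ : ℤ => ℂ) 2) = cc • lp.single 2 k (1:ℂ) := by
    ext m
    by_cases hmk : m = k
    · subst hmk; simp [lp.single_apply_self]
    · simp [lp.single_apply_ne _ _ _ hmk, Pi.single_apply, hmk]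
  have hs2 : (fourierBasis (T := 1)).repr.symm (cc • lp.single 2 k 1)
      = cc • (fourierBasis (T := 1)) k := by
    rw [_root_.map_smul, (fourierBasis (T := 1)).repr_symm_single]
  rw [Hop_apply, hsingle, hs2]
  have hcoe : (mulΦ (cc • (fourierBasis (T := 1)) k) : AddCircle (1:ℝ) → ℂ)
      =ᵐ[@haarAddCircle 1 _] fun x => cc * (Φ x * fourier k x) := by
    have h0 : (mulΦ (cc • (fourierBasis (T := 1)) k) : AddCircle (1:ℝ) → ℂ)
        =ᵐ[@haarAddCircle 1 _] fun x => Φ x * ((cc • (fourierBasis (T := 1)) k : Lp ℂ 2 (@haarAddCircle 1 _)) : AddCircle (1:ℝ) → ℂ) x :=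
      MemLp.coeFn_toLp (memLp_mulPhi _)
    have h1 : ((cc • (fourierBasis (T := 1)) k : Lp ℂ 2 (@haarAddCircle 1 _)) : AddCircle (1:ℝ) → ℂ)
        =ᵐ[@haarAddCircle 1 _] cc • (((fourierBasis (T := 1)) k : Lp ℂ 2 (@haarAddCircle 1 _)) : AddCircle (1:ℝ) → ℂ) :=
      Lp.coeFn_smul _ _
    have h2 : (((fourierBasis (T := 1)) k : Lp ℂ 2 (@haarAddCircle 1 _)) : AddCircle (1:ℝ) → ℂ)
        =ᵐ[@haarAddCircle 1 _] fourier k := by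
      rw [coe_fourierBasis]
      exact coeFn_fourierLp 2 k
    filter_upwards [h0, h1, h2] with x hx0 hx1 hx2
    rw [hx0, hx1, Pi.smul_apply, hx2, smul_eq_mul]
    ring
  rw [fourierBasis_repr, fourierCoeff_congr hcoe, fourierCoeff.const_mul]
  have hshift : fourierCoeff (fun x => Φ x * fourier k x) j = fourierCoeff Φ (j - k) := by
    unfold fourierCoeff
    refine integral_congr_ae (Filter.Eventually.of_forall fun x => ?_)
    have : fourier (-(j - k)) x = fourier (-j) x * fourier k x := by
      rw [← fourier_add]
      congr 1
      ring_nf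
    simp only [smul_eq_mul]
    rw [this]
    ring
  rw [hshift, fourierCoeff_Φ]
  by_cases hkj : k = j
  · simp [hkj]
  · rw [if_neg (sub_ne_zero.mpr (Ne.symm hkj)), if_neg hkj]
    push_cast
    ring

def eval (j : ℤ) : lp (fun _ : ℤ => ℂ) 2 →L[ℂ] ℂ :=
  LinearMap.mkContinuous
    { toFun := fun a => a j
      map_add' := fun _ _ => rfl
      map_smul' := fun _ _ => rfl }
    1 (fun a => by rw [one_mul]; exact lp.norm_apply_le_norm two_ne_zero a j)

lemma eval_apply (j : ℤ) (a : lp (fun _ : ℤ => ℂ) 2) : eval j a = a j := rfl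

end DHT

/-- The discrete Hilbert transform on `ℓ²(ℤ)`, given by the matrix `h j k = 1/(j-k)` for
`j ≠ k` and `0` on the diagonal, defines a bounded linear operator on `ℓ²(ℤ)` with
operator norm at most `π`. -/
theorem discrete_hilbert_transform_bounded :
    ∃ H : lp (fun _ : ℤ => ℂ) 2 →L[ℂ] lp (fun _ : ℤ => ℂ) 2,
      ‖H‖ ≤ Real.pi ∧
      ∀ (a : lp (fun _ : ℤ => ℂ) 2) (j : ℤ),
        (H a : ∀ _ : ℤ, ℂ) j = ∑' k : ℤ, if k = j then 0 else a k / ((j : ℂ) - (k : ℂ)) := by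
  refine ⟨DHT.Hop, DHT.Hop_norm, fun a j => ?_⟩
  have hsum : HasSum (fun k : ℤ => lp.single 2 k (a k)) a := lp.hasSum_single (by norm_num) a
  have h2 : HasSum (fun k : ℤ => (DHT.eval j) (DHT.Hop (lp.single 2 k (a k))))
      ((DHT.eval j) (DHT.Hop a)) := (hsum.mapL DHT.Hop).mapL (DHT.eval j)
  have h4 : HasSum (fun k : ℤ => if k = j then 0 else a k / ((j : ℂ) - (k : ℂ)))
      ((DHT.eval j) (DHT.Hop a)) := by
    refine h2.congr_fun fun k => ?_
    rw [DHT.eval_apply, DHT.Hop_single]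
  rw [show (DHT.Hop a : ∀ _ : ℤ, ℂ) j = (DHT.eval j) (DHT.Hop a) from rfl]
  exact h4.tsum_eq.symm
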